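/- Let H = p·F + q·G where F, G, H are CDFs of random variables in [0,1], p, q > 0, p + q = 1. Define F_u* = max((H - q)/p, 0). Then ∫₀¹(1 - F(x))dx ≤ ∫₀¹(1 - F_u*(x))dx = ∫₀¹ min(1 - H(x), p)/p dx. -/

import Mathlib

open MeasureTheory intervalIntegral

/-- Lemma 1, upper bound: if `H = p•F + q•G` is a mixture of CDFs on `[0,1]`,
then `∫₀¹ (1-F) ≤ ∫₀¹ (1 - F_u*) = ∫₀¹ min(1-H, p)/p` for
`F_u* = max((H-q)/p, 0)`. -/
theorem stmt_1 (F G H : ℝ → ℝ) (p q : ℝ)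
    (hp : 0 < p) (hq : 0 < q) (hpq : p + q = 1)
    (hFmono : Monotone F) (hGmono : Monotone G) (hHmono : Monotone H)
    (hFrange : ∀ x, F x ∈ Set.Icc (0:ℝ) 1)
    (hGrange : ∀ x, G x ∈ Set.Icc (0:ℝ) 1)
    (hHrange : ∀ x, H x ∈ Set.Icc (0:ℝ) 1)
    (hmix : ∀ x, H x = p * F x + q * G x) :
    (∫ x in (0:ℝ)..1, (1 - F x)) ≤ (∫ x in (0:ℝ)..1, (1 - max ((H x - q) / p) 0)) ∧
    (∫ x in (0:ℝ)..1, (1 - max ((H x - q) / p) 0)) =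
      ∫ x in (0:ℝ)..1, min (1 - H x) p / p := by
  have hanti1 : Antitone fun x => 1 - F x := fun a b hab => sub_le_sub_left (hFmono hab) 1
  have hmono2 : Monotone fun x => max ((H x - q) / p) 0 := fun a b hab => by
    exact max_le_max (by gcongr <;> linarith [hHmono hab]) le_rfl
  have hanti2 : Antitone fun x => 1 - max ((H x - q) / p) 0 := fun a b hab => sub_le_sub_left (hmono2 hab) 1
  have hle : ∀ x, 1 - F x ≤ 1 - max ((H x - q) / p) 0 := by
    intro x
    have h1 : (H x - q) / p ≤ F x := by
      rw [div_le_iff₀ hp]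
      have := (hGrange x).2
      rw [hmix x]; nlinarith
    have h2 : (0:ℝ) ≤ F x := (hFrange x).1
    simp only [sub_le_sub_iff_left, max_le_iff]
    exact ⟨h1, h2⟩
  have hkey : ∀ x, 1 - max ((H x - q) / p) 0 = min (1 - H x) p / p := by
    intro x
    rcases le_or_gt q (H x) with h | h
    · rw [max_eq_left (div_nonneg (by linarith) hp.le), min_eq_left (by linarith)]
      field_simp
      linarith
    · rw [max_eq_right (by apply div_nonpos_of_nonpos_of_nonneg <;> linarith),
        min_eq_right (by linarith)]
      field_simp
      norm_num
  constructor
  · apply intervalIntegral.integral_mono_on (by norm_num)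
    · exact hanti1.intervalIntegrable
    · exact hanti2.intervalIntegrable
    · exact fun x _ => hle x
  · exact intervalIntegral.integral_congr fun x _ => hkey x
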